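/- Let V be a finite-dimensional real inner product space, Ω ⊆ V a nonempty proper open convex cone, and H ⊆ V a linear subspace with orthogonal complement H^⊥. Then H^⊥ ∩ Ω* ≠ ∅ if and only if H ∩ closure(Ω) = {0}. -/

import Mathlib

open Set Filter Topology
open scoped Pointwise RealInnerProductSpace

/-- A subset `C` of a real vector space is a cone if `t • x ∈ C` for all `x ∈ C`, `t > 0`. -/
def IsCone {V : Type*} [AddCommGroup V] [Module ℝ V] (C : Set V) : Prop :=
  ∀ x ∈ C, ∀ t : ℝ, 0 < t → t • x ∈ C

/-- The open dual cone of an open cone `Ω` with respect to the inner product. -/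
def openDualCone {V : Type*} [NormedAddCommGroup V] [InnerProductSpace ℝ V] (Ω : Set V) :
    Set V :=
  {v | ∀ ω ∈ closure Ω, ω ≠ 0 → 0 < ⟪v, ω⟫}

/-- The convex hull of a nonempty compact set in a finite-dimensional normed space is compact. -/
lemma isCompact_convexHull_of_isCompact {V : Type*} [NormedAddCommGroup V]
    [NormedSpace ℝ V] [FiniteDimensional ℝ V] {s : Set V} (hsne : s.Nonempty)
    (hs : IsCompact s) : IsCompact (convexHull ℝ s) := by
  obtain ⟨s₀, hs₀⟩ := hsne
  set n := Module.finrank ℝ V + 1 with hn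
  set g : (Fin n → ℝ) × (Fin n → V) → V := fun p => ∑ i, p.1 i • p.2 i with hg
  have hgcont : Continuous g := by
    apply continuous_finset_sum
    intro i _
    exact ((continuous_apply i).comp continuous_fst).smul
      ((continuous_apply i).comp continuous_snd)
  have hD : IsCompact ((stdSimplex ℝ (Fin n)) ×ˢ (Set.pi Set.univ fun _ : Fin n => s)) :=
    IsCompact.prod (isCompact_stdSimplex (𝕜 := ℝ) (ι := Fin n)) (isCompact_univ_pi fun _ => hs)
  have him : convexHull ℝ s
      = g '' ((stdSimplex ℝ (Fin n)) ×ˢ (Set.pi Set.univ fun _ : Fin n => s)) := by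
    apply Set.Subset.antisymm
    · intro x hx
      obtain ⟨ι, hfin, z, w, hzs, haff, hw0, hw1, hxeq⟩ :=
        eq_pos_convex_span_of_mem_convexHull hx
      have hcard : Fintype.card ι ≤ n := by
        have h1 := haff.card_le_finrank_succ
        have h2 : Module.finrank ℝ (vectorSpan ℝ (Set.range z)) ≤ Module.finrank ℝ V :=
          Submodule.finrank_le _
        omega
      obtain ⟨e⟩ : Nonempty (ι ↪ Fin n) := by
        rw [Function.Embedding.nonempty_iff_card_le, Fintype.card_fin]
        exact hcard
      set w' : Fin n → ℝ := Function.extend e w 0 with hw'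
      set z' : Fin n → V := Function.extend e z (fun _ => s₀) with hz'
      have hwe : ∀ i, w' (e i) = w i := fun i => e.injective.extend_apply w 0 i
      have hze : ∀ i, z' (e i) = z i := fun i => e.injective.extend_apply z _ i
      have hw'0 : ∀ j, 0 ≤ w' j := by
        intro j
        by_cases hj : ∃ i, e i = j
        · obtain ⟨i, rfl⟩ := hj
          rw [hwe]
          exact (hw0 i).le
        · rw [hw', Function.extend_apply' _ _ _ hj]
          rfl
      have hzero : ∀ j ∈ Finset.univ, j ∉ Finset.univ.map e → w' j = 0 := by
        intro j _ hj
        rw [Finset.mem_map] at hj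
        push_neg at hj
        rw [hw', Function.extend_apply' _ _ _ (fun ⟨i, hi⟩ => hj i (Finset.mem_univ i) hi)]
        rfl
      have hw'sum : ∑ j, w' j = 1 := by
        rw [← Finset.sum_subset (Finset.subset_univ (Finset.univ.map e)) hzero,
          Finset.sum_map]
        simpa [hwe] using hw1
      have hz's : ∀ j, z' j ∈ s := by
        intro j
        by_cases hj : ∃ i, e i = j
        · obtain ⟨i, rfl⟩ := hj
          rw [hze]
          exact hzs ⟨i, rfl⟩
        · rw [hz', Function.extend_apply' _ _ _ hj]
          exact hs₀
      refine ⟨(w', z'), ⟨⟨hw'0, hw'sum⟩, fun j _ => hz's j⟩, ?_⟩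
      show (∑ j, w' j • z' j) = x
      rw [← hxeq]
      rw [← Finset.sum_subset (Finset.subset_univ (Finset.univ.map e))
        (fun j hj1 hj2 => by rw [hzero j hj1 hj2, zero_smul]), Finset.sum_map]
      simp only [hwe, hze]
    · rintro x ⟨⟨w, z⟩, ⟨hw, hz⟩, rfl⟩
      exact mem_convexHull_of_exists_fintype w z hw.1 hw.2 (fun i => hz i (Set.mem_univ i)) rfl
  rw [him]
  exact hD.image hgcont

theorem stmt_2 {V : Type*} [NormedAddCommGroup V] [InnerProductSpace ℝ V]
    [FiniteDimensional ℝ V]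
    (Ω : Set V) (hne : Ω.Nonempty) (hopen : IsOpen Ω) (hconv : Convex ℝ Ω)
    (hcone : IsCone Ω) (hproper : closure Ω ∩ -closure Ω = {0})
    (H : Submodule ℝ V) :
    ((Hᗮ : Set V) ∩ openDualCone Ω).Nonempty ↔ (H : Set V) ∩ closure Ω = {0} := by
  have hCl : IsClosed (closure Ω) := isClosed_closure
  have hClconv : Convex ℝ (closure Ω) := hconv.closure
  have hClcone : ∀ x ∈ closure Ω, ∀ t : ℝ, 0 < t → t • x ∈ closure Ω := by
    intro x hx t ht
    have hmap : Set.MapsTo (fun y : V => t • y) Ω (closure Ω) :=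
      fun y hy => subset_closure (hcone y hy t ht)
    have := (hmap.closure (continuous_const_smul t)) hx
    rwa [closure_closure] at this
  have h0Cl : (0 : V) ∈ closure Ω := by
    obtain ⟨x, hx⟩ := hne
    have htend : Tendsto (fun n : ℕ => (1 / ((n : ℝ) + 1)) • x) atTop (𝓝 (0 : V)) := by
      have h := tendsto_one_div_add_atTop_nhds_zero_nat (𝕜 := ℝ)
      have := h.smul_const x
      simpa using this
    exact mem_closure_of_tendsto htend (Filter.Eventually.of_forall fun n =>
      hcone x hx (1 / ((n : ℝ) + 1)) (by positivity))
  constructor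
  · rintro ⟨v, hvH, hvD⟩
    apply Set.Subset.antisymm
    · rintro x ⟨hxH, hxCl⟩
      simp only [Set.mem_singleton_iff]
      by_contra hx0
      have h1 : 0 < ⟪v, x⟫ := hvD x hxCl hx0
      have h2 : ⟪x, v⟫ = 0 := (Submodule.mem_orthogonal _ v).mp hvH x hxH
      rw [real_inner_comm] at h2
      linarith
    · intro x hx
      rw [Set.mem_singleton_iff] at hx
      subst hx
      exact ⟨H.zero_mem, h0Cl⟩
  · intro hH
    by_cases hS : ∀ ω ∈ closure Ω, ω = 0
    · exact ⟨0, Hᗮ.zero_mem, fun ω hω hω0 => absurd (hS ω hω) hω0⟩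
    · push_neg at hS
      set K := closure Ω ∩ Metric.sphere (0 : V) 1 with hKdef
      have hKcomp : IsCompact K := (isCompact_sphere (0 : V) 1).inter_left hCl
      have hSconv : Convex ℝ (closure Ω \ {0}) := by
        intro x hx y hy a b ha hb hab
        refine ⟨hClconv hx.1 hy.1 ha hb hab, ?_⟩
        simp only [Set.mem_singleton_iff]
        intro hz
        rcases ha.eq_or_lt with rfl | ha'
        · have hb1 : b = 1 := by linarith
          rw [hb1, zero_smul, one_smul, zero_add] at hz
          exact hy.2 hz
        · rcases hb.eq_or_lt with rfl | hb'
          · have ha1 : a = 1 := by linarith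
            rw [ha1, zero_smul, one_smul, add_zero] at hz
            exact hx.2 hz
          · have hax : a • x ∈ closure Ω := hClcone x hx.1 a ha'
            have hby : b • y ∈ closure Ω := hClcone y hy.1 b hb'
            have hneg : a • x ∈ -closure Ω := by
              rw [Set.mem_neg]
              have h1 : a • x = -(b • y) := eq_neg_of_add_eq_zero_left hz
              rw [h1, neg_neg]
              exact hby
            have hmem : a • x ∈ closure Ω ∩ -closure Ω := ⟨hax, hneg⟩
            rw [hproper, Set.mem_singleton_iff] at hmem
            rcases smul_eq_zero.mp hmem with h | h
            · exact absurd h (ne_of_gt ha')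
            · exact hx.2 h
      have hKsub : K ⊆ closure Ω \ {0} := by
        rintro x ⟨hx1, hx2⟩
        refine ⟨hx1, ?_⟩
        simp only [Set.mem_singleton_iff]
        intro h
        rw [h] at hx2
        simp at hx2
      have hKne : K.Nonempty := by
        obtain ⟨ω₀, hω₀, hω₀ne⟩ := hS
        have hn : 0 < ‖ω₀‖ := norm_pos_iff.mpr hω₀ne
        refine ⟨(‖ω₀‖⁻¹) • ω₀, hClcone ω₀ hω₀ _ (inv_pos.mpr hn), ?_⟩
        simp [norm_smul, abs_of_pos (inv_pos.mpr hn), inv_mul_cancel₀ hn.ne']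
      have hCK : IsCompact (convexHull ℝ K) := isCompact_convexHull_of_isCompact hKne hKcomp
      have hCKsub : convexHull ℝ K ⊆ closure Ω \ {0} := convexHull_min hKsub hSconv
      have hdisj : Disjoint (H : Set V) (convexHull ℝ K) := by
        rw [Set.disjoint_left]
        intro x hxH hxK
        have hx := hCKsub hxK
        have hmem : x ∈ (H : Set V) ∩ closure Ω := ⟨hxH, hx.1⟩
        rw [hH, Set.mem_singleton_iff] at hmem
        exact hx.2 hmem
      obtain ⟨f, u, w, hfu, huw, hfw⟩ :=
        geometric_hahn_banach_closed_compact H.convex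
          (Submodule.closed_of_finiteDimensional H) (convex_convexHull ℝ K) hCK hdisj
      have hfH : ∀ h ∈ H, f h = 0 := by
        intro h hh
        by_contra hc
        have := hfu (((u + 1) / f h) • h) (H.smul_mem _ hh)
        rw [map_smul, smul_eq_mul, div_mul_cancel₀ _ hc] at this
        linarith
      have hu0 : 0 < u := by
        have := hfu 0 H.zero_mem
        simpa using this
      set v0 := (InnerProductSpace.toDual ℝ V).symm f with hv0
      refine ⟨v0, ?_, ?_⟩
      · rw [SetLike.mem_coe, Submodule.mem_orthogonal]
        intro x hx
        rw [real_inner_comm, hv0, InnerProductSpace.toDual_symm_apply]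
        exact hfH x hx
      · intro ω hω hωne
        have hn : 0 < ‖ω‖ := norm_pos_iff.mpr hωne
        have hunit : (‖ω‖⁻¹) • ω ∈ K := by
          refine ⟨hClcone ω hω _ (inv_pos.mpr hn), ?_⟩
          simp [norm_smul, abs_of_pos (inv_pos.mpr hn), inv_mul_cancel₀ hn.ne']
        have hfpos : 0 < f ((‖ω‖⁻¹) • ω) :=
          lt_trans (lt_trans hu0 huw) (hfw _ (subset_convexHull ℝ K hunit))
        rw [map_smul, smul_eq_mul] at hfpos
        have hfin : 0 < f ω := by
          have := mul_pos hn hfpos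
          rwa [mul_inv_cancel_left₀ hn.ne'] at this
        show 0 < ⟪v0, ω⟫
        rw [hv0, InnerProductSpace.toDual_symm_apply]
        exact hfin
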